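/- Let E₀, E₁ be positive C² functions on an open set D ⊆ ℝ², t ∈ [0,1], and set E_t = E₀E₁/((1-t)E₁+tE₀). If Δ log E₀ = -K₀E₀² and Δ log E₁ = -K₁E₁² with K₀, K₁ > 0 pointwise, then Δ log E_t < 0 pointwise on D. (Equivalently, the harmonic-mean interpolation of conformal factors of two metrics of positive Gauss curvature again has positive Gauss curvature.) -/

import Mathlib

open Real Filter Topology


/-- The Euclidean Laplacian of a function on `ℝ × ℝ`, written with iterated
one-dimensional derivatives. -/
noncomputable def lap (f : ℝ × ℝ → ℝ) (p : ℝ × ℝ) : ℝ :=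
  deriv (fun x => deriv (fun x' => f (x', p.2)) x) p.1 +
  deriv (fun y => deriv (fun y' => f (p.1, y')) y) p.2


lemma key1d (t : ℝ) (ht0 : 0 ≤ t) (ht1 : t ≤ 1)
    (h₀ h₁ : ℝ → ℝ) (s : Set ℝ) (hs : IsOpen s)
    (h₀pos : ∀ y ∈ s, 0 < h₀ y) (h₁pos : ∀ y ∈ s, 0 < h₁ y)
    (hc₀ : ContDiffOn ℝ 2 h₀ s) (hc₁ : ContDiffOn ℝ 2 h₁ s)
    (x : ℝ) (hx : x ∈ s) :
    deriv (deriv (fun y => Real.log (h₀ y * h₁ y / ((1 - t) * h₁ y + t * h₀ y)))) x ≤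
      ((1 - t) * h₁ x / ((1 - t) * h₁ x + t * h₀ x)) *
        deriv (deriv (fun y => Real.log (h₀ y))) x +
      (t * h₀ x / ((1 - t) * h₁ x + t * h₀ x)) *
        deriv (deriv (fun y => Real.log (h₁ y))) x := by
  have hW : ∀ y ∈ s, 0 < (1 - t) * h₁ y + t * h₀ y := by
    intro y hy
    rcases lt_or_ge t 1 with h | h
    · exact add_pos_of_pos_of_nonneg (mul_pos (by linarith) (h₁pos y hy))
        (mul_nonneg ht0 (h₀pos y hy).le)
    · exact add_pos_of_nonneg_of_pos (mul_nonneg (by linarith) (h₁pos y hy).le)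
        (mul_pos (by linarith) (h₀pos y hy))
  have d₀ : ∀ y ∈ s, DifferentiableAt ℝ h₀ y := fun y hy =>
    (hc₀.contDiffAt (hs.mem_nhds hy)).differentiableAt two_ne_zero
  have d₁ : ∀ y ∈ s, DifferentiableAt ℝ h₁ y := fun y hy =>
    (hc₁.contDiffAt (hs.mem_nhds hy)).differentiableAt two_ne_zero
  have d₀' : DifferentiableAt ℝ (deriv h₀) x :=
    ((hc₀.deriv_of_isOpen (m := 1) hs (by norm_num)).contDiffAt (hs.mem_nhds hx)).differentiableAt one_ne_zero
  have d₁' : DifferentiableAt ℝ (deriv h₁) x :=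
    ((hc₁.deriv_of_isOpen (m := 1) hs (by norm_num)).contDiffAt (hs.mem_nhds hx)).differentiableAt one_ne_zero
  -- first derivatives of the logs on s
  have du : ∀ y ∈ s, deriv (fun z => Real.log (h₀ z)) y = deriv h₀ y / h₀ y := fun y hy =>
    deriv.log (d₀ y hy) (h₀pos y hy).ne'
  have dv : ∀ y ∈ s, deriv (fun z => Real.log (h₁ z)) y = deriv h₁ y / h₁ y := fun y hy =>
    deriv.log (d₁ y hy) (h₁pos y hy).ne'
  have dWfun : ∀ y ∈ s, HasDerivAt (fun z => (1 - t) * h₁ z + t * h₀ z)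
      ((1 - t) * deriv h₁ y + t * deriv h₀ y) y := fun y hy =>
    ((d₁ y hy).hasDerivAt.const_mul (1 - t)).add ((d₀ y hy).hasDerivAt.const_mul t)
  -- first derivative of the target on s
  have dtarget : ∀ y ∈ s,
      deriv (fun z => Real.log (h₀ z * h₁ z / ((1 - t) * h₁ z + t * h₀ z))) y =
        deriv h₀ y / h₀ y + deriv h₁ y / h₁ y -
          ((1 - t) * deriv h₁ y + t * deriv h₀ y) / ((1 - t) * h₁ y + t * h₀ y) := by
    intro y hy
    have heq : (fun z => Real.log (h₀ z * h₁ z / ((1 - t) * h₁ z + t * h₀ z))) =ᶠ[𝓝 y]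
        fun z => Real.log (h₀ z) + Real.log (h₁ z) -
          Real.log ((1 - t) * h₁ z + t * h₀ z) := by
      filter_upwards [hs.mem_nhds hy] with z hz
      rw [Real.log_div (mul_pos (h₀pos z hz) (h₁pos z hz)).ne' (hW z hz).ne',
        Real.log_mul (h₀pos z hz).ne' (h₁pos z hz).ne']
    rw [heq.deriv_eq]
    have hu : HasDerivAt (fun z => Real.log (h₀ z)) (deriv h₀ y / h₀ y) y :=
      (d₀ y hy).hasDerivAt.log (h₀pos y hy).ne'
    have hv : HasDerivAt (fun z => Real.log (h₁ z)) (deriv h₁ y / h₁ y) y :=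
      (d₁ y hy).hasDerivAt.log (h₁pos y hy).ne'
    have hw : HasDerivAt (fun z => Real.log ((1 - t) * h₁ z + t * h₀ z))
        (((1 - t) * deriv h₁ y + t * deriv h₀ y) / ((1 - t) * h₁ y + t * h₀ y)) y :=
      (dWfun y hy).log (hW y hy).ne'
    exact ((hu.add hv).sub hw).deriv
  set A₀ := h₀ x with hA₀
  set A₁ := h₁ x with hA₁
  set D₀ := deriv h₀ x with hD₀
  set D₁ := deriv h₁ x with hD₁
  set C₀ := deriv (deriv h₀) x with hC₀
  set C₁ := deriv (deriv h₁) x with hC₁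
  have hA₀pos : 0 < A₀ := h₀pos x hx
  have hA₁pos : 0 < A₁ := h₁pos x hx
  have hWpos : 0 < (1 - t) * A₁ + t * A₀ := hW x hx
  -- second derivative of the target
  have hLHS : deriv (deriv (fun y => Real.log (h₀ y * h₁ y / ((1 - t) * h₁ y + t * h₀ y)))) x =
      (C₀ * A₀ - D₀ * D₀) / A₀ ^ 2 + (C₁ * A₁ - D₁ * D₁) / A₁ ^ 2 -
        (((1 - t) * C₁ + t * C₀) * ((1 - t) * A₁ + t * A₀) -
          ((1 - t) * D₁ + t * D₀) * ((1 - t) * D₁ + t * D₀)) / ((1 - t) * A₁ + t * A₀) ^ 2 := by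
    have e2 : deriv (fun z => Real.log (h₀ z * h₁ z / ((1 - t) * h₁ z + t * h₀ z))) =ᶠ[𝓝 x]
        fun y => deriv h₀ y / h₀ y + deriv h₁ y / h₁ y -
          ((1 - t) * deriv h₁ y + t * deriv h₀ y) / ((1 - t) * h₁ y + t * h₀ y) := by
      filter_upwards [hs.mem_nhds hx] with z hz using dtarget z hz
    rw [e2.deriv_eq]
    have h1 : HasDerivAt (fun y => deriv h₀ y / h₀ y) ((C₀ * A₀ - D₀ * D₀) / A₀ ^ 2) x :=
      d₀'.hasDerivAt.div (d₀ x hx).hasDerivAt hA₀pos.ne'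
    have h2 : HasDerivAt (fun y => deriv h₁ y / h₁ y) ((C₁ * A₁ - D₁ * D₁) / A₁ ^ 2) x :=
      d₁'.hasDerivAt.div (d₁ x hx).hasDerivAt hA₁pos.ne'
    have hnum : HasDerivAt (fun y => (1 - t) * deriv h₁ y + t * deriv h₀ y)
        ((1 - t) * C₁ + t * C₀) x :=
      (d₁'.hasDerivAt.const_mul (1 - t)).add (d₀'.hasDerivAt.const_mul t)
    have h3 : HasDerivAt
        (fun y => ((1 - t) * deriv h₁ y + t * deriv h₀ y) / ((1 - t) * h₁ y + t * h₀ y))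
        ((((1 - t) * C₁ + t * C₀) * ((1 - t) * A₁ + t * A₀) -
          ((1 - t) * D₁ + t * D₀) * (((1 - t) * D₁ + t * D₀))) / ((1 - t) * A₁ + t * A₀) ^ 2) x :=
      hnum.div (dWfun x hx) hWpos.ne'
    exact ((h1.add h2).sub h3).deriv
  have hu2 : deriv (deriv (fun y => Real.log (h₀ y))) x = (C₀ * A₀ - D₀ * D₀) / A₀ ^ 2 := by
    have e : deriv (fun z => Real.log (h₀ z)) =ᶠ[𝓝 x] fun y => deriv h₀ y / h₀ y := by
      filter_upwards [hs.mem_nhds hx] with z hz using du z hz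
    rw [e.deriv_eq]
    exact (d₀'.hasDerivAt.div (d₀ x hx).hasDerivAt hA₀pos.ne').deriv
  have hv2 : deriv (deriv (fun y => Real.log (h₁ y))) x = (C₁ * A₁ - D₁ * D₁) / A₁ ^ 2 := by
    have e : deriv (fun z => Real.log (h₁ z)) =ᶠ[𝓝 x] fun y => deriv h₁ y / h₁ y := by
      filter_upwards [hs.mem_nhds hx] with z hz using dv z hz
    rw [e.deriv_eq]
    exact (d₁'.hasDerivAt.div (d₁ x hx).hasDerivAt hA₁pos.ne').deriv
  rw [hLHS, hu2, hv2]
  have hident : (C₀ * A₀ - D₀ * D₀) / A₀ ^ 2 + (C₁ * A₁ - D₁ * D₁) / A₁ ^ 2 -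
        (((1 - t) * C₁ + t * C₀) * ((1 - t) * A₁ + t * A₀) -
          ((1 - t) * D₁ + t * D₀) * ((1 - t) * D₁ + t * D₀)) / ((1 - t) * A₁ + t * A₀) ^ 2 =
      (1 - t) * A₁ / ((1 - t) * A₁ + t * A₀) * ((C₀ * A₀ - D₀ * D₀) / A₀ ^ 2) +
        t * A₀ / ((1 - t) * A₁ + t * A₀) * ((C₁ * A₁ - D₁ * D₁) / A₁ ^ 2) -
        (t * A₀ / ((1 - t) * A₁ + t * A₀)) * ((1 - t) * A₁ / ((1 - t) * A₁ + t * A₀)) *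
          (D₀ / A₀ - D₁ / A₁) ^ 2 := by
    have hWne := hWpos.ne'
    generalize hWd : (1 - t) * A₁ + t * A₀ = W at hWne ⊢
    field_simp
    rw [← hWd]
    ring
  rw [hident]
  have hsq : 0 ≤ (t * A₀ / ((1 - t) * A₁ + t * A₀)) *
      ((1 - t) * A₁ / ((1 - t) * A₁ + t * A₀)) * (D₀ / A₀ - D₁ / A₁) ^ 2 :=
    mul_nonneg (mul_nonneg (div_nonneg (mul_nonneg ht0 hA₀pos.le) hWpos.le)
      (div_nonneg (mul_nonneg (by linarith) hA₁pos.le) hWpos.le)) (sq_nonneg _)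
  linarith

/-- If `E₀, E₁` are positive `C²` functions on an open set `D ⊆ ℝ²`
with `Δ log Eᵢ = -Kᵢ Eᵢ²` for positive functions `Kᵢ`, then for `t ∈ [0,1]` the
interpolation `E_t = E₀E₁/((1-t)E₁ + tE₀)` satisfies `Δ log E_t < 0` on `D`
(i.e. the interpolated conformal metric again has positive Gauss curvature). -/
theorem laplacian_log_interpolation_neg
    (D : Set (ℝ × ℝ)) (hD : IsOpen D)
    (E₀ E₁ K₀ K₁ : ℝ × ℝ → ℝ)
    (hE₀pos : ∀ p ∈ D, 0 < E₀ p) (hE₁pos : ∀ p ∈ D, 0 < E₁ p)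
    (hE₀ : ContDiffOn ℝ 2 E₀ D) (hE₁ : ContDiffOn ℝ 2 E₁ D)
    (hK₀pos : ∀ p ∈ D, 0 < K₀ p) (hK₁pos : ∀ p ∈ D, 0 < K₁ p)
    (hlap₀ : ∀ p ∈ D, lap (fun q => Real.log (E₀ q)) p = -(K₀ p) * (E₀ p) ^ 2)
    (hlap₁ : ∀ p ∈ D, lap (fun q => Real.log (E₁ q)) p = -(K₁ p) * (E₁ p) ^ 2)
    (t : ℝ) (ht : t ∈ Set.Icc (0 : ℝ) 1) :
    ∀ p ∈ D,
      lap (fun q => Real.log (E₀ q * E₁ q / ((1 - t) * E₁ q + t * E₀ q))) p < 0 := by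
  obtain ⟨ht0, ht1⟩ := ht
  intro p hp
  -- x-direction slice
  have embx : ContDiffOn ℝ 2 (fun x : ℝ => ((x, p.2) : ℝ × ℝ)) Set.univ :=
    (contDiff_id.prodMk contDiff_const).contDiffOn
  have emby : ContDiffOn ℝ 2 (fun y : ℝ => ((p.1, y) : ℝ × ℝ)) Set.univ :=
    (contDiff_const.prodMk contDiff_id).contDiffOn
  set sx : Set ℝ := (fun x : ℝ => ((x, p.2) : ℝ × ℝ)) ⁻¹' D with hsxdef
  set sy : Set ℝ := (fun y : ℝ => ((p.1, y) : ℝ × ℝ)) ⁻¹' D with hsydef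
  have hsxo : IsOpen sx := hD.preimage (continuous_id.prodMk continuous_const)
  have hsyo : IsOpen sy := hD.preimage (continuous_const.prodMk continuous_id)
  have hpx : p.1 ∈ sx := by simp only [hsxdef, Set.mem_preimage]; exact hp
  have hpy : p.2 ∈ sy := by simp only [hsydef, Set.mem_preimage]; exact hp
  have hcx₀ : ContDiffOn ℝ 2 (fun x : ℝ => E₀ (x, p.2)) sx :=
    hE₀.comp (embx.mono (Set.subset_univ _)) (fun x hx => hx)
  have hcx₁ : ContDiffOn ℝ 2 (fun x : ℝ => E₁ (x, p.2)) sx :=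
    hE₁.comp (embx.mono (Set.subset_univ _)) (fun x hx => hx)
  have hcy₀ : ContDiffOn ℝ 2 (fun y : ℝ => E₀ (p.1, y)) sy :=
    hE₀.comp (emby.mono (Set.subset_univ _)) (fun x hx => hx)
  have hcy₁ : ContDiffOn ℝ 2 (fun y : ℝ => E₁ (p.1, y)) sy :=
    hE₁.comp (emby.mono (Set.subset_univ _)) (fun x hx => hx)
  have kx := key1d t ht0 ht1 (fun x : ℝ => E₀ (x, p.2)) (fun x : ℝ => E₁ (x, p.2)) sx hsxo
    (fun y hy => hE₀pos _ hy) (fun y hy => hE₁pos _ hy) hcx₀ hcx₁ p.1 hpx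
  have ky := key1d t ht0 ht1 (fun y : ℝ => E₀ (p.1, y)) (fun y : ℝ => E₁ (p.1, y)) sy hsyo
    (fun y hy => hE₀pos _ hy) (fun y hy => hE₁pos _ hy) hcy₀ hcy₁ p.2 hpy
  simp only [Prod.mk.eta] at kx ky
  have l0 : deriv (deriv (fun x' => Real.log (E₀ (x', p.2)))) p.1 +
      deriv (deriv (fun y' => Real.log (E₀ (p.1, y')))) p.2 = -(K₀ p) * (E₀ p) ^ 2 :=
    hlap₀ p hp
  have l1 : deriv (deriv (fun x' => Real.log (E₁ (x', p.2)))) p.1 +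
      deriv (deriv (fun y' => Real.log (E₁ (p.1, y')))) p.2 = -(K₁ p) * (E₁ p) ^ 2 :=
    hlap₁ p hp
  have hW : 0 < (1 - t) * E₁ p + t * E₀ p := by
    rcases lt_or_ge t 1 with h | h
    · exact add_pos_of_pos_of_nonneg (mul_pos (by linarith) (hE₁pos p hp))
        (mul_nonneg ht0 (hE₀pos p hp).le)
    · exact add_pos_of_nonneg_of_pos (mul_nonneg (by linarith) (hE₁pos p hp).le)
        (mul_pos (by linarith) (hE₀pos p hp))
  set B := (1 - t) * E₁ p / ((1 - t) * E₁ p + t * E₀ p) with hBdef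
  set A := t * E₀ p / ((1 - t) * E₁ p + t * E₀ p) with hAdef
  have hBnn : 0 ≤ B := div_nonneg (mul_nonneg (by linarith) (hE₁pos p hp).le) hW.le
  have hAnn : 0 ≤ A := div_nonneg (mul_nonneg ht0 (hE₀pos p hp).le) hW.le
  have hBA : B + A = 1 := by
    rw [hBdef, hAdef, ← add_div, div_eq_one_iff_eq hW.ne']
  have hX : 0 < K₀ p * (E₀ p) ^ 2 := mul_pos (hK₀pos p hp) (pow_pos (hE₀pos p hp) 2)
  have hY : 0 < K₁ p * (E₁ p) ^ 2 := mul_pos (hK₁pos p hp) (pow_pos (hE₁pos p hp) 2)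
  show deriv (deriv (fun x' => Real.log (E₀ (x', p.2) * E₁ (x', p.2) /
        ((1 - t) * E₁ (x', p.2) + t * E₀ (x', p.2))))) p.1 +
      deriv (deriv (fun y' => Real.log (E₀ (p.1, y') * E₁ (p.1, y') /
        ((1 - t) * E₁ (p.1, y') + t * E₀ (p.1, y'))))) p.2 < 0
  calc _ ≤ (B * deriv (deriv (fun x' => Real.log (E₀ (x', p.2)))) p.1 +
        A * deriv (deriv (fun x' => Real.log (E₁ (x', p.2)))) p.1) +
        (B * deriv (deriv (fun y' => Real.log (E₀ (p.1, y')))) p.2 +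
        A * deriv (deriv (fun y' => Real.log (E₁ (p.1, y')))) p.2) := add_le_add kx ky
    _ = B * (deriv (deriv (fun x' => Real.log (E₀ (x', p.2)))) p.1 +
        deriv (deriv (fun y' => Real.log (E₀ (p.1, y')))) p.2) +
        A * (deriv (deriv (fun x' => Real.log (E₁ (x', p.2)))) p.1 +
        deriv (deriv (fun y' => Real.log (E₁ (p.1, y')))) p.2) := by ring
    _ = B * (-(K₀ p) * (E₀ p) ^ 2) + A * (-(K₁ p) * (E₁ p) ^ 2) := by rw [l0, l1]
    _ < 0 := by
        rcases hBnn.eq_or_lt with hB0 | hBpos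
        · have hA1 : A = 1 := by linarith
          rw [← hB0, hA1]; nlinarith
        · nlinarith [mul_pos hBpos hX, mul_nonneg hAnn hY.le]
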